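/- Let ψ : [t₀, ∞) → ℝ₊ be continuous, non-increasing, with ψ(t) < 1/t for all sufficiently large t, and suppose inf over t₀ < t < t₁ of (1/t − ψ(t)) is positive for all large t₀ and all t₁ > t₀. Then there exists (indeed uncountably many) α ∈ ℝ such that the system ⟨αq⟩² / ψ(t)² + q²/t² < 2/√3 fails to have a solution q ∈ ℕ for an unbounded set of t; that is, D₂(ψ)ᶜ ≠ ∅. -/

import Mathlib

/-- distance from a real number to a nearest integer -/
noncomputable def nearestIntDist (x : ℝ) : ℝ := |x - round x|

/-- membership in `D₂(ψ)`: for all sufficiently large `t` there is `q ∈ ℕ` with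
`(⟨αq⟩/ψ(t))² + (q/t)² < 2/√3` -/
noncomputable def memD2 (ψ : ℝ → ℝ) (α : ℝ) : Prop :=
  ∃ T : ℝ, ∀ t : ℝ, T ≤ t → ∃ q : ℕ, 0 < q ∧
    nearestIntDist (α * q) ^ 2 / ψ t ^ 2 + (q : ℝ) ^ 2 / t ^ 2 < 2 / Real.sqrt 3


private lemma core_int (κ N M' r q : ℤ) (hgood : κ^2 + 3 = 4*N*M') :
    (κ*q - 2*N*r)^2 + 3*q^2 = 4*N*(N*r^2 - κ*q*r + M'*q^2) := by
  linear_combination q^2 * hgood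

private lemma F_pos (κ N M' r q : ℤ) (hgood : κ^2 + 3 = 4*N*M') (hN : 0 < N) (hq : q ≠ 0) :
    1 ≤ N*r^2 - κ*q*r + M'*q^2 := by
  have h4 := core_int κ N M' r q hgood
  have hq1 : 1 ≤ q^2 := by
    have := Int.one_le_abs hq
    nlinarith [sq_abs q]
  nlinarith [sq_nonneg (κ*q - 2*N*r)]

private lemma fail_at (c t p α : ℝ) (κ N M' : ℤ) (q : ℕ)
    (hc0 : 0 < c) (hcsq : c^2 = 4/3)
    (hN : 0 < N) (hgood : κ^2 + 3 = 4*N*M')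
    (ht : 0 < t) (hteq : t^2 = c*N)
    (hp : 0 < p) (hplt : p < 1/t)
    (hq : 0 < q)
    (hα : |α - (κ:ℝ)/(2*N)| < (1 - t*p)/(2*N*(2*N+2))) :
    c ≤ nearestIntDist (α*q)^2 / p^2 + (q:ℝ)^2/t^2 := by
  have hNR : (0:ℝ) < (N:ℝ) := by exact_mod_cast hN
  have hNne : (N:ℝ) ≠ 0 := ne_of_gt hNR
  have hcne : c ≠ 0 := ne_of_gt hc0
  have htne : t ≠ 0 := ne_of_gt ht
  have hpne : p ≠ 0 := ne_of_gt hp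
  have hθ1 : t*p < 1 := by
    have h := (mul_lt_mul_iff_right₀ ht).mpr hplt
    rwa [mul_one_div, div_self (ne_of_gt ht)] at h
  have hθ0 : 0 < t*p := mul_pos ht hp
  rcases le_or_gt c ((q:ℝ)^2 / t^2) with hbig | hsmall
  · have h0 : 0 ≤ nearestIntDist (α*q)^2 / p^2 := by positivity
    linarith
  · obtain ⟨r, hrdef⟩ : ∃ r:ℤ, r = round (α * (q:ℝ)) := ⟨_, rfl⟩
    obtain ⟨m, hmdef⟩ : ∃ m:ℤ, m = κ * q - 2*N*r := ⟨_, rfl⟩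
    obtain ⟨F, hFdef⟩ : ∃ F:ℤ, F = N*r^2 - κ*q*r + M'*q^2 := ⟨_, rfl⟩
    obtain ⟨DQ, hDQdef⟩ : ∃ DQ:ℝ, DQ = |(m:ℝ)| / (2*N) := ⟨_, rfl⟩
    have hqZ : ((q:ℤ)) ≠ 0 := by exact_mod_cast hq.ne'
    have hF1R : (1:ℝ) ≤ (F:ℝ) := by
      rw [hFdef]; exact_mod_cast F_pos κ N M' r q hgood hN hqZ
    have hid : ((m:ℝ))^2 + 3*(q:ℝ)^2 = 4*(N:ℝ)*(F:ℝ) := by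
      rw [hmdef, hFdef]
      exact_mod_cast congrArg (Int.cast : ℤ → ℝ) (core_int κ N M' r q hgood)
    have hq1 : (1:ℝ) ≤ (q:ℝ) := by exact_mod_cast hq
    have hqb : (q:ℝ) ≤ 2*N + 2 := by
      have h1 : (q:ℝ)^2 < c * t^2 := by
        rw [div_lt_iff₀ (by positivity)] at hsmall
        linarith
      rw [hteq] at h1
      nlinarith
    have hDQ2 : DQ^2 = (m:ℝ)^2 / (4*(N:ℝ)^2) := by
      rw [hDQdef, div_pow, sq_abs]; ring_nf
    have hkey : t^2 * DQ^2 + (q:ℝ)^2 / t^2 = c * F := by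
      rw [hDQ2, hteq]
      field_simp
      linear_combination ((m:ℝ)^2 - 4*(N:ℝ)*(F:ℝ)) * hcsq + (4/3) * hid
    have hmne : m ≠ 0 := by
      intro h0
      have hDQ0 : DQ = 0 := by rw [hDQdef, h0]; simp
      have : (q:ℝ)^2 / t^2 = c * F := by
        rw [← hkey, hDQ0]; ring
      nlinarith
    have hm1 : (1:ℝ) ≤ |(m:ℝ)| := by
      have := Int.one_le_abs hmne
      exact_mod_cast this
    have hDQlb : 1/(2*(N:ℝ)) ≤ DQ := by
      rw [hDQdef]
      gcongr
    have hrel : (κ:ℝ)/(2*N) * q - r = (m:ℝ)/(2*N) := by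
      rw [hmdef]
      push_cast
      field_simp
    have habs : DQ = |(κ:ℝ)/(2*N) * q - r| := by
      rw [hrel, hDQdef, abs_div, abs_of_pos (by positivity : (0:ℝ) < 2*(N:ℝ))]
    have htri : DQ - |α - (κ:ℝ)/(2*N)| * q ≤ |α*q - r| := by
      have h1 : |(κ:ℝ)/(2*N) * q - r| - |α*q - r| ≤ |((κ:ℝ)/(2*N) * q - r) - (α*q - r)| :=
        abs_sub_abs_le_abs_sub _ _
      have h2 : |((κ:ℝ)/(2*N) * q - r) - (α*q - r)| = |α - (κ:ℝ)/(2*N)| * q := by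
        rw [show ((κ:ℝ)/(2*N) * q - r) - (α*q - r) = -((α - (κ:ℝ)/(2*N)) * q) by ring,
          abs_neg, abs_mul, Nat.abs_cast]
      rw [habs]
      linarith [h1, h2.le, h2.ge]
    have hηq : |α - (κ:ℝ)/(2*N)| * q ≤ (1 - t*p) * DQ := by
      have h1 : |α - (κ:ℝ)/(2*N)| * q ≤ ((1 - t*p)/(2*N*(2*N+2))) * (2*N+2) :=
        mul_le_mul hα.le hqb (Nat.cast_nonneg q)
          (div_nonneg (by linarith) (by positivity))
      have h2 : ((1 - t*p)/(2*(N:ℝ)*(2*N+2))) * (2*N+2) = (1-t*p) * (1/(2*N)) := by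
        field_simp
      rw [h2] at h1
      refine le_trans h1 ?_
      exact mul_le_mul_of_nonneg_left hDQlb (by linarith)
    have hndist : (t*p) * DQ ≤ nearestIntDist (α*q) := by
      have he : nearestIntDist (α*(q:ℝ)) = |α*q - r| := by
        rw [nearestIntDist, hrdef]
      rw [he, show (t*p) * DQ = DQ - (1 - t*p) * DQ by ring]
      linarith
    have hDQnn : 0 ≤ DQ := by rw [hDQdef]; positivity
    have hnn : 0 ≤ (t*p) * DQ := mul_nonneg hθ0.le hDQnn
    have h2 : ((t*p) * DQ)^2 ≤ nearestIntDist (α*q)^2 :=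
      pow_le_pow_left₀ hnn hndist 2
    have h3 : ((t*p) * DQ)^2 / p^2 = t^2 * DQ^2 := by
      rw [mul_pow, mul_pow]
      field_simp
    have hfin : c ≤ t^2 * DQ^2 + (q:ℝ)^2/t^2 := by
      rw [hkey]
      calc c = c * 1 := (mul_one c).symm
      _ ≤ c * F := by
        exact mul_le_mul_of_nonneg_left hF1R hc0.le
    refine le_trans hfin ?_
    have hmono : t^2*DQ^2 ≤ nearestIntDist (α*q)^2 / p^2 := by
      rw [← h3]
      gcongr
    linarith



private lemma dense_good (x : ℝ) (ε : ℝ) (hε : 0 < ε) (M : ℕ) :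
    ∃ κ N M' : ℤ, (M:ℤ) ≤ N ∧ 0 < N ∧ κ^2 + 3 = 4*N*M' ∧
      |(κ:ℝ)/(2*(N:ℝ)) - x| < ε := by
  obtain ⟨ρ, hρ⟩ := exists_rat_near x (half_pos hε)
  obtain ⟨a, hadef⟩ : ∃ a:ℤ, a = ρ.num := ⟨_, rfl⟩
  obtain ⟨cc, hccdef⟩ : ∃ cc:ℤ, cc = (ρ.den:ℤ) := ⟨_, rfl⟩
  have hcc0 : 0 < cc := by rw [hccdef]; exact_mod_cast ρ.pos
  have hcop : IsCoprime a cc := by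
    rw [Int.isCoprime_iff_gcd_eq_one, hadef, hccdef]
    simpa [Int.gcd] using ρ.reduced
  obtain ⟨u, v, huv⟩ := hcop
  obtain ⟨K, hK⟩ := exists_nat_gt (max (M:ℝ) (2/ε))
  obtain ⟨k, hkdef⟩ : ∃ k:ℤ, k = |u| + K + 1 := ⟨_, rfl⟩
  obtain ⟨d, hddef⟩ : ∃ d:ℤ, d = u + cc * k := ⟨_, rfl⟩
  obtain ⟨b, hbdef⟩ : ∃ b:ℤ, b = -v + a * k := ⟨_, rfl⟩
  have hk0 : 0 ≤ k := by
    rw [hkdef]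
    have : (0:ℤ) ≤ |u| := abs_nonneg u
    have : (0:ℤ) ≤ (K:ℤ) := Int.ofNat_nonneg K
    omega
  have hdet : a*d - b*cc = 1 := by
    rw [hddef, hbdef]
    linear_combination huv
  have hdK : (K:ℤ) + 1 ≤ d := by
    rw [hddef, hkdef]
    have h1 : cc * (|u| + K + 1) ≥ 1 * (|u| + K + 1) := by
      apply mul_le_mul_of_nonneg_right hcc0
      have : (0:ℤ) ≤ |u| := abs_nonneg u
      have : (0:ℤ) ≤ (K:ℤ) := Int.ofNat_nonneg K
      omega
    have h2 : u + |u| ≥ 0 := by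
      rcases abs_cases u with ⟨h,_⟩|⟨h,_⟩ <;> omega
    linarith
  have hMK : (M:ℝ) < K := lt_of_le_of_lt (le_max_left _ _) hK
  have hεK : 2/ε < (K:ℝ) := lt_of_le_of_lt (le_max_right _ _) hK
  have hd1 : 1 ≤ d := by
    have : (0:ℤ) ≤ (K:ℤ) := Int.ofNat_nonneg K
    omega
  obtain ⟨κ, hκdef⟩ : ∃ κ:ℤ, κ = 2*a*cc + 2*b*d + a*d + b*cc := ⟨_, rfl⟩
  obtain ⟨N, hNdef⟩ : ∃ N:ℤ, N = cc^2 + cc*d + d^2 := ⟨_, rfl⟩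
  obtain ⟨M', hM'def⟩ : ∃ M':ℤ, M' = a^2 + a*b + b^2 := ⟨_, rfl⟩
  have hN0 : 0 < N := by rw [hNdef]; nlinarith
  have hNd : d ≤ N := by rw [hNdef]; nlinarith
  have hMN : (M:ℤ) ≤ N := by
    have h1 : (M:ℤ) < (K:ℤ) := by exact_mod_cast hMK
    omega
  have hgood : κ^2 + 3 = 4*N*M' := by
    have base : κ^2 + 3*(a*d - b*cc)^2 = 4*N*M' := by
      rw [hκdef, hNdef, hM'def]; ring
    rw [hdet] at base
    linarith
  have herr : cc*κ - 2*N*a = -(cc + 2*d) := by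
    have h1 : cc*κ - 2*N*a = (cc + 2*d)*(b*cc - a*d) := by
      rw [hκdef, hNdef]; ring
    rw [h1, show b*cc - a*d = -1 by linarith]
    ring
  -- real versions
  have hccR : (1:ℝ) ≤ (cc:ℝ) := by exact_mod_cast hcc0
  have hdR : (1:ℝ) ≤ (d:ℝ) := by exact_mod_cast hd1
  have hNR : (0:ℝ) < (N:ℝ) := by exact_mod_cast hN0
  have hεd : 2 < ε*(d:ℝ) := by
    have hdKR : (K:ℝ) + 1 ≤ (d:ℝ) := by exact_mod_cast hdK
    have h2 : 2/ε < (d:ℝ) := by linarith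
    rw [div_lt_iff₀ hε] at h2
    linarith [h2]
  have hNRe : (N:ℝ) = (cc:ℝ)^2 + (cc:ℝ)*(d:ℝ) + (d:ℝ)^2 := by exact_mod_cast hNdef
  have herrR : (cc:ℝ)*(κ:ℝ) - 2*(N:ℝ)*(a:ℝ) = -((cc:ℝ) + 2*(d:ℝ)) := by exact_mod_cast herr
  have hclose1 : |(κ:ℝ)/(2*N) - (a:ℝ)/cc| < ε/2 := by
    have hccR0 : (0:ℝ) < (cc:ℝ) := by linarith
    have heq : (κ:ℝ)/(2*N) - (a:ℝ)/cc = -((cc:ℝ) + 2*d)/(2*N*cc) := by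
      rw [div_sub_div _ _ (by positivity) (ne_of_gt hccR0), div_eq_div_iff (by positivity) (by positivity)]
      linear_combination (2*(N:ℝ)*(cc:ℝ)) * herrR
    rw [heq, abs_div, abs_of_pos (by positivity : (0:ℝ) < 2*(N:ℝ)*(cc:ℝ)), abs_neg,
      abs_of_pos (by positivity : (0:ℝ) < (cc:ℝ) + 2*(d:ℝ)), div_lt_iff₀ (by positivity)]
    -- cc + 2d < ε/2 * (2*N*cc)
    nlinarith [mul_pos hNR hccR0, hεd, hccR, hdR, hNRe]
  have hclose2 : |(a:ℝ)/cc - x| < ε/2 := by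
    have : ((ρ:ℝ)) = (a:ℝ)/cc := by
      rw [hadef, hccdef, Rat.cast_def]
      norm_cast
    rw [← this, abs_sub_comm]
    exact hρ
  refine ⟨κ, N, M', hMN, hN0, hgood, ?_⟩
  calc |(κ:ℝ)/(2*(N:ℝ)) - x| ≤ |(κ:ℝ)/(2*N) - (a:ℝ)/cc| + |(a:ℝ)/cc - x| := abs_sub_le _ _ _
  _ < ε/2 + ε/2 := add_lt_add hclose1 hclose2
  _ = ε := add_halves ε


/-- If `ψ` is continuous, non-increasing, positive, with `ψ(t) < 1/t` eventually and
`inf (1/t − ψ(t))` positive on large bounded windows, then the complement of `D₂(ψ)` is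
uncountable (in particular nonempty). -/
theorem D2_complement_uncountable (t₀ : ℝ) (ht₀ : 1 ≤ t₀) (ψ : ℝ → ℝ)
    (hpos : ∀ t ≥ t₀, 0 < ψ t)
    (hcont : ContinuousOn ψ (Set.Ici t₀))
    (hanti : AntitoneOn ψ (Set.Ici t₀))
    (hlt : ∃ T ≥ t₀, ∀ t ≥ T, ψ t < 1 / t)
    (hinf : ∃ T ≥ t₀, ∀ s ≥ T, ∀ t₁ > s,
      ∃ ε > 0, ∀ t ∈ Set.Ioo s t₁, ε ≤ 1 / t - ψ t) :
    ¬ Set.Countable {α : ℝ | ¬ memD2 ψ α} := by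
  intro hcount
  obtain ⟨T, hTt₀, hT⟩ := hlt
  have hs3 : (0:ℝ) < Real.sqrt 3 := Real.sqrt_pos.mpr (by norm_num)
  have hc0 : (0:ℝ) < 2 / Real.sqrt 3 := by positivity
  have hcsq : (2 / Real.sqrt 3)^2 = 4/3 := by
    rw [div_pow, Real.sq_sqrt (by norm_num : (0:ℝ) ≤ 3)]; norm_num
  have hc1 : (1:ℝ) ≤ 2 / Real.sqrt 3 := by
    rw [le_div_iff₀ hs3]
    nlinarith [Real.sq_sqrt (show (0:ℝ) ≤ 3 by norm_num), Real.sqrt_nonneg 3]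
  obtain ⟨B, hBdef⟩ : ∃ B:ℝ, B = max t₀ T := ⟨_, rfl⟩
  have hB1 : 1 ≤ B := hBdef ▸ le_trans ht₀ (le_max_left _ _)
  have hB0 : 0 ≤ B := by linarith
  obtain ⟨M₀, hM₀⟩ := exists_nat_gt (B^2)
  obtain ⟨U, hUdef⟩ : ∃ U : ℕ → Set ℝ, U = fun (n : ℕ) =>
    ⋃ (κ : ℤ) (N : ℤ) (η : ℝ)
      (_ : 0 < η ∧ (n:ℝ) ≤ (N:ℝ) ∧
        ∀ α : ℝ, |α - (κ:ℝ)/(2*(N:ℝ))| < η → ∀ q : ℕ, 0 < q →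
          ¬ (nearestIntDist (α * q) ^ 2 / ψ (Real.sqrt ((2/Real.sqrt 3) * N)) ^ 2
              + (q : ℝ) ^ 2 / (Real.sqrt ((2/Real.sqrt 3) * N)) ^ 2 < 2 / Real.sqrt 3)),
      Metric.ball ((κ:ℝ)/(2*(N:ℝ))) η := ⟨_, rfl⟩
  have hUopen : ∀ n, IsOpen (U n) := by
    intro n
    rw [hUdef]
    exact isOpen_iUnion fun κ => isOpen_iUnion fun N => isOpen_iUnion fun η =>
      isOpen_iUnion fun _ => Metric.isOpen_ball
  have hUdense : ∀ n, Dense (U n) := by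
    intro n
    rw [Metric.dense_iff]
    intro x ε hε
    obtain ⟨κ, N, M', hMN, hN0, hgood, hclose⟩ :=
      dense_good x ε hε (max n M₀)
    have hNR : (0:ℝ) < (N:ℝ) := by exact_mod_cast hN0
    have hnN : ((n:ℕ):ℝ) ≤ (N:ℝ) := by
      have h2 : (n:ℤ) ≤ ((max n M₀ : ℕ):ℤ) := by exact_mod_cast le_max_left n M₀
      exact_mod_cast le_trans h2 hMN
    have hBN : B^2 ≤ (N:ℝ) := by
      have h1 : ((max n M₀ : ℕ):ℝ) ≤ (N:ℝ) := by exact_mod_cast hMN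
      have h2 : ((M₀:ℕ):ℝ) ≤ ((max n M₀ : ℕ):ℝ) := by exact_mod_cast le_max_right n M₀
      linarith
    obtain ⟨t, htdef⟩ : ∃ t:ℝ, t = Real.sqrt ((2/Real.sqrt 3) * N) := ⟨_, rfl⟩
    have hcN : (0:ℝ) ≤ (2/Real.sqrt 3) * N := by positivity
    have ht2 : t^2 = (2/Real.sqrt 3)*N := by rw [htdef]; exact Real.sq_sqrt hcN
    have ht0 : 0 < t := by rw [htdef]; exact Real.sqrt_pos.mpr (by positivity)
    have htB : B ≤ t := by
      have h1 : B = Real.sqrt (B^2) := (Real.sqrt_sq hB0).symm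
      rw [h1, htdef]
      apply Real.sqrt_le_sqrt
      nlinarith
    have hψp : 0 < ψ t := hpos t (le_trans (hBdef ▸ le_max_left t₀ T) htB)
    have hψlt : ψ t < 1/t := hT t (le_trans (hBdef ▸ le_max_right t₀ T) htB)
    have hη0 : 0 < (1 - t*(ψ t))/(2*(N:ℝ)*(2*(N:ℝ)+2)) := by
      apply div_pos
      · have h := (mul_lt_mul_iff_right₀ ht0).mpr hψlt
        rw [mul_one_div, div_self (ne_of_gt ht0)] at h
        linarith
      · positivity
    refine ⟨(κ:ℝ)/(2*(N:ℝ)), ?_, ?_⟩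
    · rw [Metric.mem_ball, Real.dist_eq]
      exact hclose
    · rw [hUdef]
      simp only [Set.mem_iUnion]
      refine ⟨κ, N, _, ⟨hη0, hnN, ?_⟩, Metric.mem_ball_self hη0⟩
      intro α hα q hq
      apply not_lt.mpr
      rw [← htdef]
      exact fail_at (2/Real.sqrt 3) t (ψ t) α κ N M' q hc0 hcsq hN0 hgood ht0 ht2 hψp hψlt hq hα
  -- Baire
  have hS'c : (insert (0:ℝ) {α : ℝ | ¬ memD2 ψ α}).Countable := hcount.insert 0
  obtain ⟨f, hf⟩ := hS'c.exists_eq_range ⟨0, Set.mem_insert 0 _⟩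
  have hWopen : ∀ n, IsOpen (U n \ {f n}) := fun n =>
    (hUopen n).sdiff isClosed_singleton
  have hWdense : ∀ n, Dense (U n \ {f n}) := fun n =>
    (hUdense n).diff_singleton (f n)
  have hdense : Dense (⋂ n, U n \ {f n}) := dense_iInter_of_isOpen hWopen hWdense
  obtain ⟨x, hx⟩ := hdense.nonempty
  rw [Set.mem_iInter] at hx
  have hxS : ¬ memD2 ψ x := by
    rintro ⟨T₀, hmem⟩
    obtain ⟨n, hndef⟩ := exists_nat_gt ((max T₀ 0)^2)
    have hxU : x ∈ U n := (hx n).1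
    rw [hUdef] at hxU
    simp only [Set.mem_iUnion] at hxU
    obtain ⟨κ, N, η, ⟨hη, hnN, hball⟩, hxball⟩ := hxU
    obtain ⟨t, htdef⟩ : ∃ t:ℝ, t = Real.sqrt ((2/Real.sqrt 3) * N) := ⟨_, rfl⟩
    have hNR : (0:ℝ) ≤ (N:ℝ) := le_trans (Nat.cast_nonneg n) hnN
    have hT₀t : T₀ ≤ t := by
      have h1 : (max T₀ 0)^2 ≤ (n:ℝ) := hndef.le
      have h3 : Real.sqrt ((max T₀ 0)^2) ≤ t := by
        rw [htdef]
        apply Real.sqrt_le_sqrt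
        nlinarith
      calc T₀ ≤ max T₀ 0 := le_max_left _ _
      _ = Real.sqrt ((max T₀ 0)^2) := (Real.sqrt_sq (le_max_right _ _)).symm
      _ ≤ t := h3
    obtain ⟨q, hq, hqlt⟩ := hmem t hT₀t
    rw [Metric.mem_ball, Real.dist_eq] at hxball
    rw [htdef] at hqlt
    exact hball x hxball q hq hqlt
  have hxmem : x ∈ Set.range f := by
    rw [← hf]
    exact Set.mem_insert_of_mem _ hxS
  obtain ⟨n, hn⟩ := hxmem
  exact (hx n).2 (by rw [← hn]; rfl)
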